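/- Let γ: [0,∞) → (0,∞) be C^2 with γ(0) = γ'(0) = 1, γ increasing and γ'' < 0. Let t > 0 and h: [0,t] → ℝ continuous with |h(s)| ≤ -γ''(s)/γ(s). If y solves y'' = h·y on [0,t] with boundary conditions y(0) = y'(0) + 1 and y(t) = 0, then 0 ≤ y(s) ≤ (t-s)/γ(t) for all s ∈ [0,t]. -/

import Mathlib

open Set Filter Topology

lemma ode_aux_nonneg (t : ℝ) (ht : 0 < t)
    (g g' g'' u u' u'' : ℝ → ℝ)
    (hg : ∀ s ∈ Icc (0:ℝ) t, HasDerivAt g (g' s) s)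
    (hg' : ∀ s ∈ Icc (0:ℝ) t, HasDerivAt g' (g'' s) s)
    (hgpos : ∀ s ∈ Ico (0:ℝ) t, 0 < g s)
    (hgt : g t = 0)
    (hg0 : g 0 = g' 0 + 1)
    (hu : ∀ s ∈ Icc (0:ℝ) t, HasDerivAt u (u' s) s)
    (hu' : ∀ s ∈ Icc (0:ℝ) t, HasDerivAt u' (u'' s) s)
    (hcond : ∀ s ∈ Icc (0:ℝ) t, u s ≤ 0 → u'' s * g s - u s * g'' s ≤ 0)
    (hut : u t = 0) (hu0 : u' 0 ≤ u 0) :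
    ∀ s ∈ Icc (0:ℝ) t, 0 ≤ u s := by
  by_contra hcon
  push_neg at hcon
  obtain ⟨s₀, hs₀, hneg⟩ := hcon
  have hucont : ContinuousOn u (Icc 0 t) :=
    fun s hs => (hu s hs).continuousAt.continuousWithinAt
  have hs₀t : s₀ < t :=
    lt_of_le_of_ne hs₀.2 (fun e => by rw [e, hut] at hneg; linarith)
  -- the set of zeros after s₀
  set B : Set ℝ := Icc s₀ t ∩ u ⁻¹' {0} with hBdef
  have hBclosed : IsClosed B :=
    (hucont.mono (Icc_subset_Icc hs₀.1 le_rfl)).preimage_isClosed_of_isClosed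
      isClosed_Icc isClosed_singleton
  have hBne : B.Nonempty := ⟨t, ⟨hs₀.2, le_rfl⟩, by simpa using hut⟩
  have hBbdd : BddBelow B := ⟨s₀, fun x hx => hx.1.1⟩
  set b : ℝ := sInf B with hbdef
  have hbB : b ∈ B := hBclosed.csInf_mem hBne hBbdd
  have hub : u b = 0 := hbB.2
  have hbt : b ≤ t := hbB.1.2
  have hs₀b : s₀ < b :=
    lt_of_le_of_ne hbB.1.1 (fun e => by rw [e, hub] at hneg; linarith)
  have hbneg : ∀ s ∈ Ico s₀ b, u s < 0 := by
    intro s hs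
    rcases lt_trichotomy (u s) 0 with h | h | h
    · exact h
    · exact absurd (csInf_le hBbdd ⟨⟨hs.1, le_trans hs.2.le hbt⟩, by simpa using h⟩)
        (not_le.mpr hs.2)
    · exfalso
      have hss : s₀ < s :=
        lt_of_le_of_ne hs.1 (fun e => by rw [e] at hneg; linarith)
      have hiv := intermediate_value_Ioo hss.le
        (hucont.mono (Icc_subset_Icc hs₀.1 (le_trans hs.2.le hbt)))
      obtain ⟨c, hc, hc0⟩ := hiv (show (0:ℝ) ∈ Ioo (u s₀) (u s) from ⟨hneg, h⟩)
      have : b ≤ c := csInf_le hBbdd ⟨⟨hc.1.le, by linarith [hc.2, hs.2]⟩, by simpa using hc0⟩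
      linarith [hc.2, hs.2]
  -- the set of zeros before s₀ (together with 0)
  set A : Set ℝ := (Icc 0 s₀ ∩ u ⁻¹' {0}) ∪ {0} with hAdef
  have hAclosed : IsClosed A :=
    ((hucont.mono (Icc_subset_Icc le_rfl hs₀.2)).preimage_isClosed_of_isClosed
      isClosed_Icc isClosed_singleton).union isClosed_singleton
  have hAne : A.Nonempty := ⟨0, Or.inr rfl⟩
  have hAbdd : BddAbove A := ⟨s₀, by
    rintro x (⟨hx, _⟩ | hx)
    · exact hx.2
    · simp only [mem_singleton_iff] at hx; simp [hx, hs₀.1]⟩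
  set a : ℝ := sSup A with hadef
  have haA : a ∈ A := hAclosed.csSup_mem hAne hAbdd
  have ha0 : 0 ≤ a := le_csSup hAbdd (Or.inr rfl)
  have has₀ : a ≤ s₀ := by
    apply csSup_le hAne
    rintro x (⟨hx, _⟩ | hx)
    · exact hx.2
    · simp only [mem_singleton_iff] at hx; simp [hx, hs₀.1]
  have hat : a < t := lt_of_le_of_lt has₀ hs₀t
  have huaneg : ∀ s ∈ Ioc a s₀, u s < 0 := by
    intro s hs
    rcases lt_trichotomy (u s) 0 with h | h | h
    · exact h
    · exact absurd (le_csSup hAbdd (Or.inl ⟨⟨le_trans ha0 hs.1.le, hs.2⟩, by simpa using h⟩))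
        (not_le.mpr hs.1)
    · exfalso
      have hss : s < s₀ :=
        lt_of_le_of_ne hs.2 (fun e => by rw [← e] at hneg; linarith)
      have hiv := intermediate_value_Ioo' hss.le
        (hucont.mono (Icc_subset_Icc (le_trans ha0 hs.1.le) hs₀.2))
      obtain ⟨c, hc, hc0⟩ := hiv (show (0:ℝ) ∈ Ioo (u s₀) (u s) from ⟨hneg, h⟩)
      have : c ≤ a := le_csSup hAbdd
        (Or.inl ⟨⟨by linarith [hc.1, hs.1], hc.2.le⟩, by simpa using hc0⟩)
      linarith [hc.1, hs.1]
  have hua : u a ≤ 0 := by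
    rcases haA with ⟨_, hz⟩ | h0
    · simp only [mem_preimage, mem_singleton_iff] at hz; exact hz.le
    · simp only [mem_singleton_iff] at h0
      by_contra hpos
      push_neg at hpos
      have hss : a < s₀ :=
        lt_of_le_of_ne has₀ (fun e => by rw [e] at hpos; linarith)
      have hiv := intermediate_value_Ioo' hss.le
        (hucont.mono (Icc_subset_Icc ha0 hs₀.2))
      obtain ⟨c, hc, hc0⟩ := hiv (show (0:ℝ) ∈ Ioo (u s₀) (u a) from ⟨hneg, hpos⟩)
      have : c ≤ a := le_csSup hAbdd
        (Or.inl ⟨⟨by linarith [hc.1], hc.2.le⟩, by simpa using hc0⟩)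
      linarith [hc.1]
  have hab : a < b := lt_of_le_of_lt has₀ hs₀b
  have hsub : Icc a b ⊆ Icc 0 t := Icc_subset_Icc ha0 hbt
  have hu_le : ∀ s ∈ Icc a b, u s ≤ 0 := by
    intro s hs
    rcases le_or_gt s s₀ with h | h
    · rcases eq_or_lt_of_le hs.1 with h' | h'
      · rw [← h']; exact hua
      · exact (huaneg s ⟨h', h⟩).le
    · rcases eq_or_lt_of_le hs.2 with h' | h'
      · rw [h']; exact hub.le
      · exact (hbneg s ⟨h.le, h'⟩).le
  -- the Wronskian
  set W : ℝ → ℝ := fun s => u' s * g s - u s * g' s with hWdef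
  have hW : ∀ s ∈ Icc (0:ℝ) t, HasDerivAt W (u'' s * g s - u s * g'' s) s := by
    intro s hs
    have := ((hu' s hs).mul (hg s hs)).sub ((hu s hs).mul (hg' s hs))
    refine this.congr_deriv ?_
    ring
  have hanti : AntitoneOn W (Icc a b) := by
    apply antitoneOn_of_deriv_nonpos (convex_Icc a b)
    · exact fun s hs => ((hW s (hsub hs)).continuousAt).continuousWithinAt
    · intro s hs
      rw [interior_Icc] at hs
      exact ((hW s (hsub (Ioo_subset_Icc_self hs))).differentiableAt).differentiableWithinAt
    · intro s hs
      rw [interior_Icc] at hs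
      rw [(hW s (hsub (Ioo_subset_Icc_self hs))).deriv]
      exact hcond s (hsub (Ioo_subset_Icc_self hs)) (hu_le s (Ioo_subset_Icc_self hs))
  have hWb : 0 ≤ W b := by
    rcases eq_or_lt_of_le hbt with hbeq | hblt
    · rw [hWdef]; simp [hbeq, hgt, hut]
    · have hu'b : 0 ≤ u' b := by
        have hd := hu b (hsub ⟨hab.le, le_rfl⟩)
        rw [hasDerivAt_iff_tendsto_slope] at hd
        have hd' : Tendsto (slope u b) (𝓝[<] b) (𝓝 (u' b)) :=
          hd.mono_left (nhdsWithin_mono b (fun x hx => ne_of_lt hx))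
        refine ge_of_tendsto hd' ?_
        filter_upwards [Ioo_mem_nhdsLT_of_mem (⟨hs₀b, le_rfl⟩ : b ∈ Ioc s₀ b)] with s hs
        have h1 : u s < 0 := hbneg s ⟨hs.1.le, hs.2⟩
        have h2 : s - b < 0 := by linarith [hs.2]
        rw [slope_def_field, hub]
        exact div_nonneg_of_nonpos (by linarith) (by linarith)
      have hgb : 0 < g b := hgpos b ⟨le_trans ha0 hab.le, hblt⟩
      have : W b = u' b * g b := by rw [hWdef]; simp [hub]
      rw [this]
      positivity
  have hWba : W b ≤ W a := hanti (⟨le_rfl, hab.le⟩ : a ∈ Icc a b) ⟨hab.le, le_rfl⟩ hab.le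
  have hcase : u a = 0 ∨ (a = 0 ∧ u a < 0) := by
    rcases haA with ⟨_, hz⟩ | h0
    · left; simpa using hz
    · simp only [mem_singleton_iff] at h0
      rcases lt_or_eq_of_le hua with h | h
      · right; exact ⟨h0, h⟩
      · left; exact h
  rcases hcase with hz | ⟨haz, hneg0⟩
  · -- case u a = 0
    have has₀' : a < s₀ := lt_of_le_of_ne has₀ (fun e => by rw [e] at hz; linarith)
    have hu'a : u' a ≤ 0 := by
      have hd := hu a (hsub ⟨le_rfl, hab.le⟩)
      rw [hasDerivAt_iff_tendsto_slope] at hd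
      have hd' : Tendsto (slope u a) (𝓝[>] a) (𝓝 (u' a)) :=
        hd.mono_left (nhdsWithin_mono a (fun x hx => ne_of_gt hx))
      refine le_of_tendsto hd' ?_
      filter_upwards [Ioo_mem_nhdsGT_of_mem (⟨le_rfl, has₀'⟩ : a ∈ Ico a s₀)] with s hs
      have h1 : u s < 0 := huaneg s ⟨hs.1, hs.2.le⟩
      rw [slope_def_field, hz]
      exact le_of_lt (div_neg_of_neg_of_pos (by linarith) (by linarith [hs.1]))
    have hga : 0 ≤ g a := (hgpos a ⟨ha0, hat⟩).le
    have hWa : W a ≤ 0 := by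
      have hWav : W a = u' a * g a := by rw [hWdef]; simp [hz]
      rw [hWav]
      exact mul_nonpos_iff.mpr (Or.inr ⟨hu'a, hga⟩)
    have hWzero : ∀ s ∈ Icc a b, W s = 0 := by
      intro s hs
      have h1 : W s ≤ W a := hanti (⟨le_rfl, hab.le⟩ : a ∈ Icc a b) hs hs.1
      have h2 : W b ≤ W s := hanti hs (⟨hab.le, le_rfl⟩ : b ∈ Icc a b) hs.2
      linarith
    set q : ℝ → ℝ := fun s => u s / g s with hqdef
    have hq : ∀ s ∈ Icc a s₀, HasDerivAt q 0 s := by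
      intro s hs
      have hsmem : s ∈ Icc 0 t := ⟨le_trans ha0 hs.1, le_trans hs.2 hs₀.2⟩
      have hgs : 0 < g s := hgpos s ⟨hsmem.1, lt_of_le_of_lt hs.2 hs₀t⟩
      have hd := (hu s hsmem).div (hg s hsmem) (ne_of_gt hgs)
      have hws : u' s * g s - u s * g' s = 0 := hWzero s ⟨hs.1, hs.2.trans hs₀b.le⟩
      have hd2 : HasDerivAt q ((u' s * g s - u s * g' s) / g s ^ 2) s := hd
      rwa [hws, zero_div] at hd2
    obtain ⟨c, hc, hc0⟩ := exists_hasDerivAt_eq_slope q (fun _ => (0:ℝ)) has₀'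
      (fun s hs => (hq s hs).continuousAt.continuousWithinAt)
      (fun s hs => hq s (Ioo_subset_Icc_self hs))
    have hqa : q a = 0 := by rw [hqdef]; simp [hz]
    have hqs₀ : q s₀ < 0 := div_neg_of_neg_of_pos hneg (hgpos s₀ ⟨hs₀.1, hs₀t⟩)
    rw [hqa] at hc0
    have hlt : q s₀ / (s₀ - a) < 0 :=
      div_neg_of_neg_of_pos (by linarith) (by linarith)
    norm_num at hc0
    linarith [hc0, hlt]
  · -- case a = 0 and u 0 < 0
    rw [haz] at hneg0 hWba
    have hg0pos : 0 < g 0 := hgpos 0 ⟨le_rfl, ht⟩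
    have hWa0 : W 0 = u' 0 * g 0 - u 0 * g' 0 := rfl
    nlinarith [hWba, hWb, hg0pos, hneg0, hu0, hg0, hWa0,
      mul_nonpos_iff.mpr (Or.inr ⟨(by linarith : u' 0 - u 0 ≤ 0), hg0pos.le⟩)]

theorem ode_boundary_value_comparison
    (γ : ℝ → ℝ) (hγC2 : ContDiff ℝ 2 γ)
    (hγpos : ∀ s : ℝ, 0 ≤ s → 0 < γ s)
    (hγ0 : γ 0 = 1) (hγ'0 : deriv γ 0 = 1)
    (hγmono : MonotoneOn γ (Set.Ici 0))
    (hγ'' : ∀ s : ℝ, 0 ≤ s → deriv (deriv γ) s < 0)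
    (t : ℝ) (ht : 0 < t)
    (h y y' : ℝ → ℝ) (hcont : ContinuousOn h (Set.Icc 0 t))
    (hbound : ∀ s ∈ Set.Icc 0 t, |h s| ≤ -(deriv (deriv γ) s) / γ s)
    (hy : ∀ s ∈ Set.Icc 0 t, HasDerivAt y (y' s) s)
    (hy' : ∀ s ∈ Set.Icc 0 t, HasDerivAt y' (h s * y s) s)
    (hinit : y 0 = y' 0 + 1) (hend : y t = 0) :
    ∀ s ∈ Set.Icc 0 t, 0 ≤ y s ∧ y s ≤ (t - s) / γ t := by
  have hγdiff : Differentiable ℝ γ := hγC2.differentiable two_ne_zero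
  have hγd : ∀ s, HasDerivAt γ (deriv γ s) s := fun s => (hγdiff s).hasDerivAt
  have hγ'C1 : ContDiff ℝ 1 (deriv γ) := by
    have h2 : (2 : WithTop ℕ∞) = 1 + 1 := by norm_num
    rw [h2] at hγC2
    exact (contDiff_succ_iff_deriv.mp hγC2).2.2
  have hγ'diff : Differentiable ℝ (deriv γ) := hγ'C1.differentiable one_ne_zero
  have hγd2 : ∀ s, HasDerivAt (deriv γ) (deriv (deriv γ) s) s :=
    fun s => (hγ'diff s).hasDerivAt
  have hγcont : Continuous γ := hγC2.continuous
  -- the integrand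
  set f : ℝ → ℝ := fun τ => (γ τ ^ 2)⁻¹ with hfdef
  have hfmeas : Measurable f := ((hγcont.pow 2).measurable).inv
  have hfcont : ∀ s ∈ Icc (0:ℝ) t, ContinuousAt f s := by
    intro s hs
    exact ((hγcont.pow 2).continuousAt).inv₀ (pow_ne_zero 2 (hγpos s hs.1).ne')
  have hfint : ∀ s ∈ Icc (0:ℝ) t, IntervalIntegrable f MeasureTheory.volume s t := by
    intro s hs
    apply ContinuousOn.intervalIntegrable
    intro x hx
    rw [uIcc_of_le hs.2] at hx
    exact (hfcont x ⟨le_trans hs.1 hx.1, hx.2⟩).continuousWithinAt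
  set I : ℝ → ℝ := fun s => ∫ τ in s..t, f τ with hIdef
  have hI : ∀ s ∈ Icc (0:ℝ) t, HasDerivAt I (-f s) s := by
    intro s hs
    exact intervalIntegral.integral_hasDerivAt_left (hfint s hs)
      ⟨univ, univ_mem, (hfmeas.stronglyMeasurable).aestronglyMeasurable⟩ (hfcont s hs)
  have hIt : I t = 0 := intervalIntegral.integral_same
  have hInonneg : ∀ s ∈ Icc (0:ℝ) t, 0 ≤ I s := by
    intro s hs
    apply intervalIntegral.integral_nonneg hs.2
    intro τ _
    positivity
  have hIpos : ∀ s ∈ Ico (0:ℝ) t, 0 < I s := by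
    intro s hs
    apply intervalIntegral.intervalIntegral_pos_of_pos_on (hfint s ⟨hs.1, hs.2.le⟩)
      (fun x hx => by have := hγpos x (le_trans hs.1 hx.1.le); positivity) hs.2
  -- the comparison function g and its derivatives
  set g : ℝ → ℝ := fun s => γ s * I s with hgdef
  set G' : ℝ → ℝ := fun s => deriv γ s * I s - (γ s)⁻¹ with hG'def
  set G'' : ℝ → ℝ := fun s => deriv (deriv γ) s * I s with hG''def
  have hgd : ∀ s ∈ Icc (0:ℝ) t, HasDerivAt g (G' s) s := by
    intro s hs
    have hd := (hγd s).mul (hI s hs)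
    refine hd.congr_deriv ?_
    have hγs : γ s ≠ 0 := (hγpos s hs.1).ne'
    have hinv : (γ s)⁻¹ = γ s * (γ s ^ 2)⁻¹ := by
      rw [sq, mul_inv, ← mul_assoc, mul_inv_cancel₀ hγs, one_mul]
    rw [hG'def]
    simp only [hfdef]
    rw [hinv]
    ring
  have hgd' : ∀ s ∈ Icc (0:ℝ) t, HasDerivAt G' (G'' s) s := by
    intro s hs
    have hγs : γ s ≠ 0 := (hγpos s hs.1).ne'
    have h1 := (hγd2 s).mul (hI s hs)
    have h2 := (hγd s).inv hγs
    have hd := h1.sub h2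
    refine hd.congr_deriv ?_
    rw [hG''def]
    simp only [hfdef]
    rw [div_eq_mul_inv]
    ring
  have hgt : g t = 0 := by rw [hgdef]; simp [hIt]
  have hgpos : ∀ s ∈ Ico (0:ℝ) t, 0 < g s :=
    fun s hs => mul_pos (hγpos s hs.1) (hIpos s hs)
  have hg0 : g 0 = G' 0 + 1 := by
    rw [hgdef, hG'def]
    simp [hγ0, hγ'0]
  -- the key pointwise inequality γ'' ≤ h * γ
  have hkey : ∀ s ∈ Icc (0:ℝ) t, deriv (deriv γ) s ≤ h s * γ s := by
    intro s hs
    have hγs : 0 < γ s := hγpos s hs.1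
    have hb := (abs_le.mp (hbound s hs)).1
    rw [neg_div, neg_neg] at hb
    exact (div_le_iff₀ hγs).mp hb
  -- Step 1 : y is nonnegative
  have hy0 : ∀ s ∈ Icc (0:ℝ) t, 0 ≤ y s := by
    apply ode_aux_nonneg t ht g G' G'' y y' (fun s => h s * y s) hgd hgd' hgpos hgt hg0 hy hy'
      ?_ hend (by linarith)
    intro s hs hys
    have h1 := hkey s hs
    have h2 := hInonneg s hs
    have he : h s * y s * g s - y s * G'' s = y s * (I s * (h s * γ s - deriv (deriv γ) s)) := by
      rw [hgdef, hG''def]; ring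
    rw [he]
    exact mul_nonpos_iff.mpr (Or.inr ⟨hys, mul_nonneg h2 (by linarith)⟩)
  -- Step 2 : y ≤ g
  have hyg : ∀ s ∈ Icc (0:ℝ) t, y s ≤ g s := by
    have haux := ode_aux_nonneg t ht g G' G'' (fun s => g s - y s) (fun s => G' s - y' s)
      (fun s => G'' s - h s * y s) hgd hgd' hgpos hgt hg0
      (fun s hs => (hgd s hs).sub (hy s hs)) (fun s hs => (hgd' s hs).sub (hy' s hs))
      ?_ (by show g t - y t = 0; rw [hgt, hend]; ring)
      (by show G' 0 - y' 0 ≤ g 0 - y 0; linarith)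
    · intro s hs
      have := haux s hs
      linarith
    · intro s hs _
      have h1 := hkey s hs
      have h2 := hInonneg s hs
      have h3 := hy0 s hs
      have he : (G'' s - h s * y s) * g s - (g s - y s) * G'' s
          = y s * (I s * (deriv (deriv γ) s - h s * γ s)) := by
        rw [hgdef, hG''def]; ring
      rw [he]
      exact mul_nonpos_iff.mpr (Or.inl ⟨h3, mul_nonpos_iff.mpr (Or.inl ⟨h2, by linarith⟩)⟩)
  -- Step 3 : g s ≤ (t - s) / γ t
  have hγt : 0 < γ t := hγpos t ht.le
  have hG't : G' t = -(γ t)⁻¹ := by rw [hG'def]; simp [hIt]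
  have hG'anti : AntitoneOn G' (Icc 0 t) := by
    apply antitoneOn_of_deriv_nonpos (convex_Icc 0 t)
    · exact fun s hs => (hgd' s hs).continuousAt.continuousWithinAt
    · intro s hs
      rw [interior_Icc] at hs
      exact (hgd' s (Ioo_subset_Icc_self hs)).differentiableAt.differentiableWithinAt
    · intro s hs
      rw [interior_Icc] at hs
      rw [(hgd' s (Ioo_subset_Icc_self hs)).deriv, hG''def]
      exact mul_nonpos_iff.mpr
        (Or.inr ⟨(hγ'' s hs.1.le).le, hInonneg s (Ioo_subset_Icc_self hs)⟩)
  have hgbd : ∀ s ∈ Icc (0:ℝ) t, g s ≤ (t - s) / γ t := by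
    have hF : ∀ s ∈ Icc (0:ℝ) t, HasDerivAt (fun x => g x + x * (γ t)⁻¹) (G' s + (γ t)⁻¹) s := by
      intro s hs
      have := (hgd s hs).add ((hasDerivAt_id s).mul_const ((γ t)⁻¹))
      exact this.congr_deriv (by rw [one_mul])
    have hFmono : MonotoneOn (fun x => g x + x * (γ t)⁻¹) (Icc 0 t) := by
      apply monotoneOn_of_deriv_nonneg (convex_Icc 0 t)
      · exact fun s hs => (hF s hs).continuousAt.continuousWithinAt
      · intro s hs
        rw [interior_Icc] at hs
        exact (hF s (Ioo_subset_Icc_self hs)).differentiableAt.differentiableWithinAt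
      · intro s hs
        rw [interior_Icc] at hs
        rw [(hF s (Ioo_subset_Icc_self hs)).deriv]
        have := hG'anti (Ioo_subset_Icc_self hs) ⟨ht.le, le_rfl⟩ hs.2.le
        rw [hG't] at this
        linarith
    intro s hs
    have := hFmono hs ⟨ht.le, le_rfl⟩ hs.2
    simp only at this
    rw [hgt] at this
    rw [div_eq_mul_inv]
    have hinv : 0 < (γ t)⁻¹ := inv_pos.mpr hγt
    nlinarith [this]
  intro s hs
  exact ⟨hy0 s hs, le_trans (hyg s hs) (hgbd s hs)⟩
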